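/- Let D(λ) = A^{-q} ∏_{j=1}^q (λ - λ_j) with λ_j ∈ [-c, c] real, A > 0, and suppose at a point λ₊ ∈ [-c, c] (lying between min λ_j and max λ_j) one has |D(λ₊)| ≥ 2. Then h₊ := (1/q) arccosh(|D(λ₊)|/2) satisfies h₊ < ln( (c + |q^{-1}∑_j λ_j| ) / A ) ≤ ln(2c/A). -/

import Mathlib

set_option maxHeartbeats 1000000 in
/-- Bound for the maximum of the Lyapunov exponent: if
`D(λ) = A^{-q} ∏ (λ - λ_j)` with all `λ_j ∈ [-c, c]`, and at a point
`λ₊ ∈ [-c, c]` lying between `min λ_j` and `max λ_j` one has `|D(λ₊)| ≥ 2`,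
then `h₊ = (1/q) arccosh(|D(λ₊)|/2)` satisfies
`h₊ < log ((c + |q⁻¹ ∑ λ_j|)/A) ≤ log (2c/A)`. -/
theorem stmt_16 (q : ℕ) (hq : 1 ≤ q) (c A : ℝ) (hc : 0 < c) (hA : 0 < A)
    (lam : Fin q → ℝ) (hlam : ∀ j, lam j ∈ Set.Icc (-c) c)
    (hne : (Finset.univ : Finset (Fin q)).Nonempty)
    (x : ℝ) (hx : x ∈ Set.Icc (-c) c)
    (hx' : Finset.inf' Finset.univ hne lam ≤ x ∧ x ≤ Finset.sup' Finset.univ hne lam)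
    (D hp : ℝ) (hD : D = (A ^ q)⁻¹ * ∏ j, (x - lam j)) (hD2 : 2 ≤ |D|)
    (hhp : hp = (1 / q) * Real.log (|D| / 2 + Real.sqrt ((|D| / 2) ^ 2 - 1))) :
    hp < Real.log ((c + |(q : ℝ)⁻¹ * ∑ j, lam j|) / A) ∧
      Real.log ((c + |(q : ℝ)⁻¹ * ∑ j, lam j|) / A) ≤ Real.log (2 * c / A) := by
  classical
  obtain ⟨hxl, hxr⟩ := hx
  have hq0 : (0:ℝ) < q := by exact_mod_cast hq
  set s : ℝ := ∑ j, lam j with hs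
  set B : ℝ := c + |(q : ℝ)⁻¹ * s| with hB
  have hB0 : 0 < B := by positivity
  -- bound on the sum of |x - lam j|
  have hsum : ∑ j, |x - lam j| ≤ q * c + |s| := by
    set P : Finset (Fin q) := Finset.univ.filter (fun j => lam j ≤ x) with hP
    have hsplit : ∑ j, |x - lam j|
        = ∑ j ∈ P, (x - lam j) + ∑ j ∈ Pᶜ, (lam j - x) := by
      rw [← Finset.sum_add_sum_compl P]
      congr 1
      · exact Finset.sum_congr rfl fun j hj => by
          have : lam j ≤ x := (Finset.mem_filter.mp hj).2
          rw [abs_of_nonneg (by linarith)]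
      · exact Finset.sum_congr rfl fun j hj => by
          have : ¬ lam j ≤ x := by
            simpa [hP] using Finset.mem_compl.mp hj
          rw [abs_of_neg (by linarith), neg_sub]
    have h1 : ∑ j ∈ P, (x - lam j) = P.card * x - ∑ j ∈ P, lam j := by
      rw [Finset.sum_sub_distrib, Finset.sum_const, nsmul_eq_mul]
    have h2 : ∑ j ∈ Pᶜ, (lam j - x) = ∑ j ∈ Pᶜ, lam j - Pᶜ.card * x := by
      rw [Finset.sum_sub_distrib, Finset.sum_const, nsmul_eq_mul]
    set sP : ℝ := ∑ j ∈ P, lam j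
    set sN : ℝ := ∑ j ∈ Pᶜ, lam j
    have hsPN : sP + sN = s := by
      rw [hs]; exact Finset.sum_add_sum_compl P lam
    have hcard : (P.card : ℝ) + (Pᶜ.card : ℝ) = q := by
      have := Finset.card_add_card_compl P
      have : P.card + Pᶜ.card = q := by simpa using this
      exact_mod_cast this
    have hsPle : sP ≤ P.card * c := by
      calc sP ≤ ∑ _j ∈ P, c := Finset.sum_le_sum fun j _ => (hlam j).2
        _ = P.card * c := by rw [Finset.sum_const, nsmul_eq_mul]
    have hsPge : -(P.card * c) ≤ sP := by
      calc -((P.card : ℝ) * c) = ∑ _j ∈ P, (-c) := by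
            rw [Finset.sum_const, nsmul_eq_mul]; ring
        _ ≤ sP := Finset.sum_le_sum fun j _ => (hlam j).1
    have hsNle : sN ≤ Pᶜ.card * c := by
      calc sN ≤ ∑ _j ∈ Pᶜ, c := Finset.sum_le_sum fun j _ => (hlam j).2
        _ = Pᶜ.card * c := by rw [Finset.sum_const, nsmul_eq_mul]
    have habs1 : s ≤ |s| := le_abs_self s
    have habs2 : -|s| ≤ s := neg_abs_le s
    rw [hsplit, h1, h2]
    rcases le_total ((Pᶜ.card : ℝ)) ((P.card : ℝ)) with h | h
    · nlinarith [mul_nonneg (sub_nonneg.2 h) (sub_nonneg.2 hxr)]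
    · nlinarith [mul_nonneg (sub_nonneg.2 h) (by linarith : (0:ℝ) ≤ x + c)]
  -- AM-GM: product bound
  have hf0 : ∀ j : Fin q, (0:ℝ) ≤ |x - lam j| := fun j => abs_nonneg _
  have hw : ∑ _j : Fin q, (q : ℝ)⁻¹ = 1 := by
    rw [Finset.sum_const, nsmul_eq_mul]
    simp [Finset.card_univ, mul_inv_cancel₀ (ne_of_gt hq0)]
  have hgm : ∏ j, |x - lam j| ^ ((q : ℝ)⁻¹) ≤ ∑ j, (q : ℝ)⁻¹ * |x - lam j| :=
    Real.geom_mean_le_arith_mean_weighted Finset.univ _ _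
      (fun _ _ => by positivity) hw (fun j _ => hf0 j)
  have hgm2 : ∑ j, (q : ℝ)⁻¹ * |x - lam j| ≤ B := by
    rw [← Finset.mul_sum, hB]
    have h1 : (q : ℝ)⁻¹ * (∑ j, |x - lam j|) ≤ (q : ℝ)⁻¹ * (q * c + |s|) :=
      mul_le_mul_of_nonneg_left hsum (by positivity)
    have h2 : (q : ℝ)⁻¹ * (q * c + |s|) = c + |(q : ℝ)⁻¹ * s| := by
      rw [abs_mul, abs_of_nonneg (by positivity : (0:ℝ) ≤ (q:ℝ)⁻¹)]
      field_simp
    linarith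
  have hprod : ∏ j, |x - lam j| ≤ B ^ q := by
    have hkey : (∏ j, |x - lam j| ^ ((q : ℝ)⁻¹)) ^ q = ∏ j, |x - lam j| := by
      rw [← Finset.prod_pow]
      refine Finset.prod_congr rfl fun j _ => ?_
      rw [← Real.rpow_natCast (|x - lam j| ^ ((q : ℝ)⁻¹)) q,
        ← Real.rpow_mul (hf0 j), inv_mul_cancel₀ (ne_of_gt hq0), Real.rpow_one]
    calc ∏ j, |x - lam j| = (∏ j, |x - lam j| ^ ((q : ℝ)⁻¹)) ^ q := hkey.symm
      _ ≤ B ^ q := by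
          refine pow_le_pow_left₀ ?_ (le_trans hgm hgm2) q
          exact Finset.prod_nonneg fun j _ => Real.rpow_nonneg (hf0 j) _
  -- |D| ≤ (B/A)^q
  have hDabs : |D| = (A ^ q)⁻¹ * ∏ j, |x - lam j| := by
    rw [hD, abs_mul, abs_inv, abs_of_nonneg (by positivity : (0:ℝ) ≤ A ^ q),
      Finset.abs_prod]
  have hDle : |D| ≤ (B / A) ^ q := by
    rw [hDabs, div_pow]
    rw [div_eq_inv_mul]
    exact mul_le_mul_of_nonneg_left hprod (by positivity)
  -- strict bound hp < (1/q) log |D|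
  have ht1 : (1:ℝ) ≤ |D| / 2 := by linarith
  have hsqrt : Real.sqrt ((|D| / 2) ^ 2 - 1) < |D| / 2 := by
    have : Real.sqrt ((|D| / 2) ^ 2 - 1) < Real.sqrt ((|D| / 2) ^ 2) :=
      Real.sqrt_lt_sqrt (by nlinarith) (by linarith)
    rwa [Real.sqrt_sq (by linarith)] at this
  have hpos : (0:ℝ) < |D| / 2 + Real.sqrt ((|D| / 2) ^ 2 - 1) := by
    have := Real.sqrt_nonneg ((|D| / 2) ^ 2 - 1); linarith
  have hlt : Real.log (|D| / 2 + Real.sqrt ((|D| / 2) ^ 2 - 1)) < Real.log |D| := by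
    apply Real.log_lt_log hpos; linarith
  have hlog2 : Real.log |D| ≤ q * Real.log (B / A) := by
    have hBA : (0:ℝ) < B / A := by positivity
    calc Real.log |D| ≤ Real.log ((B / A) ^ q) :=
          Real.log_le_log (by linarith) hDle
      _ = q * Real.log (B / A) := by rw [Real.log_pow]
  have hpart1 : hp < Real.log (B / A) := by
    rw [hhp]
    have h3 : (1 / (q:ℝ)) * Real.log (|D| / 2 + Real.sqrt ((|D| / 2) ^ 2 - 1))
        < (1 / (q:ℝ)) * Real.log |D| :=
      mul_lt_mul_of_pos_left hlt (by positivity)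
    have h4 : (1 / (q:ℝ)) * Real.log |D| ≤ Real.log (B / A) := by
      have := mul_le_mul_of_nonneg_left hlog2 (by positivity : (0:ℝ) ≤ 1 / (q:ℝ))
      calc (1 / (q:ℝ)) * Real.log |D| ≤ (1 / (q:ℝ)) * ((q:ℝ) * Real.log (B / A)) := this
        _ = Real.log (B / A) := by field_simp
    linarith
  refine ⟨hpart1, ?_⟩
  -- second inequality: B ≤ 2c
  have hsabs : |s| ≤ q * c := by
    rw [hs]
    calc |∑ j, lam j| ≤ ∑ j, |lam j| := Finset.abs_sum_le_sum_abs _ _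
      _ ≤ ∑ _j : Fin q, c := Finset.sum_le_sum fun j _ => abs_le.mpr ⟨(hlam j).1, (hlam j).2⟩
      _ = q * c := by rw [Finset.sum_const, nsmul_eq_mul]; simp [Finset.card_univ]
  have hB2c : B ≤ 2 * c := by
    rw [hB, abs_mul, abs_of_nonneg (by positivity : (0:ℝ) ≤ (q:ℝ)⁻¹)]
    have h5 : (q:ℝ)⁻¹ * |s| ≤ (q:ℝ)⁻¹ * ((q:ℝ) * c) :=
      mul_le_mul_of_nonneg_left hsabs (by positivity)
    have h6 : (q:ℝ)⁻¹ * ((q:ℝ) * c) = c := by field_simp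
    linarith
  refine Real.log_le_log (by positivity) ?_
  gcongr
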